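/- Auxiliary lemma, part (b): for every u in D(G) and every λ > 0, the Bochner integral W := ∫₀^∞ e^{−λt} Q(t) dt exists in C₀(E), belongs to D(G), and satisfies G W = ∫₀^∞ e^{−λt} G Q(t) dt = ∫₀^∞ e^{−λt} Q^G(t) dt, where Q^G is defined like Q but with Gu in place of u. -/

import Mathlib

open MeasureTheory Set Filter Topology
open scoped ZeroAtInfty
set_option linter.unusedSectionVars false
set_option maxHeartbeats 1000000

/-- The candidate solution `Q(t) = E^x[u(M_{D_t})]` (for initial datum `u`); with `Gu` in
place of `u` this is the function `Q^G`. -/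
noncomputable def cand {E : Type*} [TopologicalSpace E]
    (P : ℝ → C₀(E, ℝ) →L[ℝ] C₀(E, ℝ)) (ν : Measure ℝ) (uφ : ℝ → ℝ)
    (u : C₀(E, ℝ)) (t : ℝ) : C₀(E, ℝ) :=
  if t = 0 then u
  else ∫ h in Set.Ioo 0 t, uφ h • (∫ r in Set.Ioi (t - h), P (r + h) u ∂ν)


section
variable {E : Type*} [MetricSpace E] [TopologicalSpace.SeparableSpace E] [LocallyCompactSpace E]
  {P : ℝ → C₀(E, ℝ) →L[ℝ] C₀(E, ℝ)} {ν : Measure ℝ} {uφ : ℝ → ℝ} {v : C₀(E, ℝ)}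

lemma aux_norm_smul (a : ℝ) (x : C₀(E, ℝ)) : ‖a • x‖ = |a| * ‖x‖ := by
  have h := norm_smul (α := ℝ) (β := C₀(E, ℝ)) a x
  rwa [Real.norm_eq_abs] at h

lemma aux_smul_sub (a : ℝ) (x y : C₀(E, ℝ)) : a • (x - y) = a • x - a • y :=
  smul_sub a x y

lemma aux_smul_comm (a b : ℝ) (x : C₀(E, ℝ)) : a • b • x = b • a • x :=
  smul_comm a b x

/-- continuity of the truncated semigroup orbit -/
lemma aux_Pmax_cont (hPsg : ∀ s t : ℝ, 0 ≤ s → 0 ≤ t → P (s + t) = (P s).comp (P t))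
    (hPcon : ∀ t : ℝ, 0 ≤ t → ∀ f : C₀(E, ℝ), ‖P t f‖ ≤ ‖f‖)
    (f : C₀(E, ℝ)) (hPsc : Tendsto (fun t => P t f) (𝓝[≥] (0 : ℝ)) (𝓝 f)) :
    Continuous fun s : ℝ => P (max s 0) f := by
  rw [Metric.continuous_iff]
  intro b ε hε
  obtain ⟨δ, hδ, hδ'⟩ := Metric.tendsto_nhdsWithin_nhds.mp hPsc ε hε
  refine ⟨δ, hδ, fun a hab => ?_⟩
  have key : ∀ x y : ℝ, 0 ≤ y → y ≤ x → x - y < δ → dist (P x f) (P y f) < ε := by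
    intro x y hy hyx hd
    have hx : P x f = P y (P (x - y) f) := by
      have h1 := hPsg y (x - y) hy (by linarith)
      rw [show y + (x - y) = x by ring] at h1
      rw [h1]; rfl
    rw [hx, dist_eq_norm, ← map_sub]
    calc ‖P y (P (x - y) f - f)‖ ≤ ‖P (x - y) f - f‖ := hPcon y hy _
      _ < ε := by
          have := hδ' (mem_Ici.mpr (by linarith : (0:ℝ) ≤ x - y))
            (by rw [Real.dist_eq, sub_zero, abs_of_nonneg (by linarith)]; exact hd)
          rwa [dist_eq_norm] at this
  have h1 : |max a 0 - max b 0| ≤ |a - b| := abs_max_sub_max_le_abs a b 0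
  have h2 : |max a 0 - max b 0| < δ := lt_of_le_of_lt h1 (by rwa [Real.dist_eq] at hab)
  rcases le_total (max b 0) (max a 0) with h | h
  · exact key _ _ (le_max_right _ _) h (by rw [abs_of_nonneg (by linarith)] at h2; linarith)
  · rw [dist_comm]
    exact key _ _ (le_max_right _ _) h (by rw [abs_of_nonpos (by linarith), neg_sub] at h2; linarith)

lemma aux_nu_fin {ν : Measure ℝ}
    (hν1 : ∫⁻ s in Set.Ioi (0 : ℝ), ENNReal.ofReal (min 1 s) ∂ν ≠ ⊤) :
    ∀ s : ℝ, 0 < s → ν (Ioi s) < ⊤ := by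
  intro s hs
  by_contra htop
  push_neg at htop
  have htop' : ν (Ioi s) = ⊤ := top_le_iff.mp htop
  have hle : ENNReal.ofReal (min 1 s) * ν (Ioi s)
      ≤ ∫⁻ r in Ioi s, ENNReal.ofReal (min 1 r) ∂ν := by
    rw [← setLIntegral_const]
    refine setLIntegral_mono (ENNReal.measurable_ofReal.comp ((measurable_const.min measurable_id))) (fun r hr => ?_)
    exact ENNReal.ofReal_le_ofReal (min_le_min le_rfl (le_of_lt hr))
  have hle2 : (∫⁻ r in Ioi s, ENNReal.ofReal (min 1 r) ∂ν)
      ≤ ∫⁻ r in Ioi (0:ℝ), ENNReal.ofReal (min 1 r) ∂ν :=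
    lintegral_mono_set (Ioi_subset_Ioi (le_of_lt hs))
  rw [htop', ENNReal.mul_top (by simp [lt_min_iff, hs, zero_lt_one] : ENNReal.ofReal (min 1 s) ≠ 0)] at hle
  exact hν1 (top_le_iff.mp (hle.trans hle2))

lemma aux_nu0_sigmaFinite {ν : Measure ℝ}
    (hν1 : ∫⁻ s in Set.Ioi (0 : ℝ), ENNReal.ofReal (min 1 s) ∂ν ≠ ⊤) :
    SigmaFinite (ν.restrict (Ioi (0:ℝ))) := by
  refine ⟨⟨⟨fun n => Iic 0 ∪ Ioi (1 / (n + 1) : ℝ), fun _ => trivial, fun n => ?_, ?_⟩⟩⟩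
  · rw [Measure.restrict_apply (by measurability)]
    refine lt_of_le_of_lt (measure_mono ?_) (aux_nu_fin hν1 (1 / (n + 1 : ℝ)) (by positivity))
    rintro x ⟨hx1 | hx1, hx2⟩
    · exact absurd (mem_Iic.mp hx1) (not_le.mpr hx2)
    · exact hx1
  · ext x
    simp only [mem_iUnion, mem_union, mem_Iic, mem_Ioi, mem_univ, iff_true]
    rcases le_or_gt x 0 with h | h
    · exact ⟨0, Or.inl h⟩
    · obtain ⟨n, hn⟩ := exists_nat_one_div_lt h
      exact ⟨n, Or.inr hn⟩



lemma aux_F_eq (ν : Measure ℝ) (v : C₀(E, ℝ)) {t h : ℝ} (hh : 0 < h) (hht : h < t) :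
    ∫ r in Ioi (t - h), P (max (r + h) 0) v ∂(ν.restrict (Ioi 0))
      = ∫ r in Ioi (t - h), P (r + h) v ∂ν := by
  rw [Measure.restrict_restrict_of_subset (Ioi_subset_Ioi (by linarith))]
  refine setIntegral_congr_fun measurableSet_Ioi (fun r hr => ?_)
  rw [max_eq_left (by simp only [mem_Ioi] at hr; linarith)]

lemma aux_Gin_sm [SFinite (ν.restrict (Ioi (0:ℝ)))]
    (hcont : Continuous fun s : ℝ => P (max s 0) v) :
    StronglyMeasurable fun p : ℝ × ℝ =>
      ∫ r in Ioi (p.1 - p.2), P (max (r + p.2) 0) v ∂(ν.restrict (Ioi 0)) := by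
  have hf : StronglyMeasurable fun q : (ℝ × ℝ) × ℝ =>
      ({q : (ℝ × ℝ) × ℝ | q.1.1 - q.1.2 < q.2}).indicator
        (fun q => P (max (q.2 + q.1.2) 0) v) q := by
    refine StronglyMeasurable.indicator ?_ ?_
    · exact (hcont.comp (by fun_prop : Continuous fun q : (ℝ × ℝ) × ℝ => q.2 + q.1.2)).stronglyMeasurable
    · exact measurableSet_lt (by fun_prop) (by fun_prop)
  have h2 := hf.integral_prod_right' (ν := ν.restrict (Ioi 0))
  have heq : ∀ p : ℝ × ℝ, (∫ r in Ioi (p.1 - p.2), P (max (r + p.2) 0) v ∂(ν.restrict (Ioi 0)))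
      = ∫ r, ({q : (ℝ × ℝ) × ℝ | q.1.1 - q.1.2 < q.2}).indicator
          (fun q => P (max (q.2 + q.1.2) 0) v) (p, r) ∂(ν.restrict (Ioi 0)) := by
    intro p
    rw [← integral_indicator measurableSet_Ioi]
    congr 1
  simp only [heq]
  exact h2

lemma aux_integrand_aesm [SFinite (ν.restrict (Ioi (0:ℝ)))] (huφm : Measurable uφ)
    (hcont : Continuous fun s : ℝ => P (max s 0) v) {t : ℝ} (ht : 0 < t) :
    AEStronglyMeasurable (fun h => uφ h • (∫ r in Ioi (t - h), P (r + h) v ∂ν))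
      (volume.restrict (Ioo 0 t)) := by
  have hsm : StronglyMeasurable fun h : ℝ =>
      uφ h • (∫ r in Ioi (t - h), P (max (r + h) 0) v ∂(ν.restrict (Ioi 0))) := by
    refine StronglyMeasurable.smul huφm.stronglyMeasurable ?_
    have h2 := (aux_Gin_sm (ν := ν) hcont).comp_measurable
      (show Measurable fun h : ℝ => (t, h) from measurable_const.prodMk measurable_id)
    simpa [Function.comp_def] using h2
  refine hsm.aestronglyMeasurable.congr ?_
  filter_upwards [ae_restrict_mem measurableSet_Ioo] with h hh
  rw [aux_F_eq ν v hh.1 hh.2]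

lemma aux_cand_aesm [SFinite (ν.restrict (Ioi (0:ℝ)))] (huφm : Measurable uφ)
    (hcont : Continuous fun s : ℝ => P (max s 0) v) :
    AEStronglyMeasurable (fun t => cand P ν uφ v t) (volume.restrict (Ioi (0:ℝ))) := by
  have hsm : StronglyMeasurable fun t : ℝ =>
      ∫ h, ({p : ℝ × ℝ | 0 < p.2 ∧ p.2 < p.1}).indicator
        (fun p => uφ p.2 • (∫ r in Ioi (p.1 - p.2), P (max (r + p.2) 0) v ∂(ν.restrict (Ioi 0))))
        (t, h) ∂(volume.restrict (Ioi 0)) := by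
    refine StronglyMeasurable.integral_prod_right' ?_
    refine StronglyMeasurable.indicator ?_ ?_
    · exact StronglyMeasurable.smul (huφm.comp measurable_snd).stronglyMeasurable (aux_Gin_sm (ν := ν) hcont)
    · exact (measurableSet_lt measurable_const measurable_snd).inter
        (measurableSet_lt measurable_snd measurable_fst)
  refine hsm.aestronglyMeasurable.congr ?_
  filter_upwards [ae_restrict_mem measurableSet_Ioi] with t ht
  have h1 : ∀ h : ℝ, ({p : ℝ × ℝ | 0 < p.2 ∧ p.2 < p.1}).indicator
      (fun p => uφ p.2 • (∫ r in Ioi (p.1 - p.2), P (max (r + p.2) 0) v ∂(ν.restrict (Ioi 0))))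
      (t, h)
      = (Ioo (0:ℝ) t).indicator
        (fun h => uφ h • (∫ r in Ioi (t - h), P (max (r + h) 0) v ∂(ν.restrict (Ioi 0)))) h := by
    intro h
    simp [Set.indicator_apply, mem_Ioo, mem_setOf_eq]
  simp only [h1]
  rw [integral_indicator measurableSet_Ioo,
    Measure.restrict_restrict_of_subset Ioo_subset_Ioi_self]
  rw [show cand P ν uφ v t = ∫ h in Ioo 0 t, uφ h • (∫ r in Ioi (t - h), P (r + h) v ∂ν)
    from by rw [cand, if_neg (ne_of_gt ht)]]
  refine setIntegral_congr_fun measurableSet_Ioo (fun h hh => ?_)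
  rw [aux_F_eq ν v hh.1 hh.2]


lemma aux_inner_integrable
    (hPcon : ∀ t : ℝ, 0 ≤ t → ∀ f : C₀(E, ℝ), ‖P t f‖ ≤ ‖f‖)
    (hν1 : ∫⁻ s in Set.Ioi (0 : ℝ), ENNReal.ofReal (min 1 s) ∂ν ≠ ⊤)
    (v : C₀(E, ℝ)) (hcont : Continuous fun x : ℝ => P (max x 0) v)
    {s h : ℝ} (hs : 0 < s) (hh : 0 < h) :
    IntegrableOn (fun r => P (r + h) v) (Ioi s) ν := by
  haveI : IsFiniteMeasure (ν.restrict (Ioi s)) :=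
    ⟨by rw [Measure.restrict_apply_univ]; exact aux_nu_fin hν1 s hs⟩
  have haesm : AEStronglyMeasurable (fun r => P (r + h) v) (ν.restrict (Ioi s)) := by
    have hc2 : Continuous fun r : ℝ => P (max (r + h) 0) v :=
      hcont.comp (continuous_id.add continuous_const)
    refine (hc2.stronglyMeasurable.aestronglyMeasurable).congr ?_
    filter_upwards [ae_restrict_mem measurableSet_Ioi] with r hr
    rw [max_eq_left (by simp only [mem_Ioi] at hr; linarith)]
  refine Integrable.mono' (integrable_const ‖v‖) haesm ?_
  filter_upwards [ae_restrict_mem measurableSet_Ioi] with r hr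
  exact hPcon (r + h) (by simp only [mem_Ioi] at hr; linarith) v

lemma aux_inner_norm
    (hPcon : ∀ t : ℝ, 0 ≤ t → ∀ f : C₀(E, ℝ), ‖P t f‖ ≤ ‖f‖)
    (hν1 : ∫⁻ s in Set.Ioi (0 : ℝ), ENNReal.ofReal (min 1 s) ∂ν ≠ ⊤)
    (v : C₀(E, ℝ)) {s h : ℝ} (hs : 0 < s) (hh : 0 < h) :
    ‖∫ r in Ioi s, P (r + h) v ∂ν‖ ≤ ‖v‖ * (ν (Ioi s)).toReal :=
  norm_setIntegral_le_of_norm_le_const (aux_nu_fin hν1 s hs)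
    (fun r hr => hPcon (r + h) (by simp only [mem_Ioi] at hr; linarith) v)

lemma aux_lint_le (huφ0 : ∀ t : ℝ, 0 < t → 0 ≤ uφ t)
    (hrenew : ∀ t : ℝ, 0 < t →
      ∫⁻ h in Set.Ioo 0 t, ν (Set.Ioi (t - h)) * ENNReal.ofReal (uφ h) = 1)
    {t : ℝ} (ht : 0 < t) :
    ∫⁻ h in Ioo 0 t, ENNReal.ofReal (uφ h * (ν (Ioi (t - h))).toReal) ≤ 1 := by
  rw [← hrenew t ht]
  refine lintegral_mono_ae ?_
  filter_upwards [ae_restrict_mem measurableSet_Ioo] with h hh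
  rw [ENNReal.ofReal_mul (huφ0 h hh.1), mul_comm (ENNReal.ofReal (uφ h))]
  exact mul_le_mul_left ENNReal.ofReal_toReal_le _

lemma aux_dom_integrable (huφm : Measurable uφ)
    (huφ0 : ∀ t : ℝ, 0 < t → 0 ≤ uφ t)
    (hrenew : ∀ t : ℝ, 0 < t →
      ∫⁻ h in Set.Ioo 0 t, ν (Set.Ioi (t - h)) * ENNReal.ofReal (uφ h) = 1)
    {t : ℝ} (ht : 0 < t) :
    IntegrableOn (fun h => uφ h * (ν (Ioi (t - h))).toReal) (Ioo 0 t) volume := by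
  have hmeas : Measurable fun h : ℝ => uφ h * (ν (Ioi (t - h))).toReal := by
    refine huφm.mul (ENNReal.measurable_toReal.comp ?_)
    exact (Antitone.measurable (fun a b hab => measure_mono (Ioi_subset_Ioi hab))).comp
      (measurable_const.sub measurable_id)
  refine ⟨hmeas.aestronglyMeasurable, ?_⟩
  rw [hasFiniteIntegral_iff_norm]
  refine lt_of_le_of_lt (le_trans (lintegral_mono_ae ?_) (aux_lint_le huφ0 hrenew ht)) ENNReal.one_lt_top
  filter_upwards [ae_restrict_mem measurableSet_Ioo] with h hh
  refine ENNReal.ofReal_le_ofReal ?_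
  rw [Real.norm_eq_abs,
    abs_of_nonneg (mul_nonneg (huφ0 h hh.1) ENNReal.toReal_nonneg)]

lemma aux_outer_integrable
    (hPcon : ∀ t : ℝ, 0 ≤ t → ∀ f : C₀(E, ℝ), ‖P t f‖ ≤ ‖f‖)
    (hν1 : ∫⁻ s in Set.Ioi (0 : ℝ), ENNReal.ofReal (min 1 s) ∂ν ≠ ⊤)
    (huφm : Measurable uφ) (huφ0 : ∀ t : ℝ, 0 < t → 0 ≤ uφ t)
    (hrenew : ∀ t : ℝ, 0 < t →
      ∫⁻ h in Set.Ioo 0 t, ν (Set.Ioi (t - h)) * ENNReal.ofReal (uφ h) = 1)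
    (v : C₀(E, ℝ)) (hcont : Continuous fun x : ℝ => P (max x 0) v)
    {t : ℝ} (ht : 0 < t) :
    IntegrableOn (fun h => uφ h • (∫ r in Ioi (t - h), P (r + h) v ∂ν)) (Ioo 0 t) volume := by
  haveI := aux_nu0_sigmaFinite hν1
  refine Integrable.mono' ((aux_dom_integrable huφm huφ0 hrenew ht).mul_const ‖v‖)
    (aux_integrand_aesm huφm hcont ht) ?_
  filter_upwards [ae_restrict_mem measurableSet_Ioo] with h hh
  rw [aux_norm_smul, abs_of_nonneg (huφ0 h hh.1)]
  have hb := aux_inner_norm hPcon hν1 v (by linarith [hh.1, hh.2] : (0:ℝ) < t - h) hh.1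
  calc uφ h * ‖∫ r in Ioi (t - h), P (r + h) v ∂ν‖
      ≤ uφ h * (‖v‖ * (ν (Ioi (t - h))).toReal) :=
        mul_le_mul_of_nonneg_left hb (huφ0 h hh.1)
    _ = uφ h * (ν (Ioi (t - h))).toReal * ‖v‖ := by ring


lemma aux_cand_norm
    (hPcon : ∀ t : ℝ, 0 ≤ t → ∀ f : C₀(E, ℝ), ‖P t f‖ ≤ ‖f‖)
    (hν1 : ∫⁻ s in Set.Ioi (0 : ℝ), ENNReal.ofReal (min 1 s) ∂ν ≠ ⊤)
    (huφm : Measurable uφ) (huφ0 : ∀ t : ℝ, 0 < t → 0 ≤ uφ t)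
    (hrenew : ∀ t : ℝ, 0 < t →
      ∫⁻ h in Set.Ioo 0 t, ν (Set.Ioi (t - h)) * ENNReal.ofReal (uφ h) = 1)
    (v : C₀(E, ℝ)) (hcont : Continuous fun x : ℝ => P (max x 0) v) (t : ℝ) :
    ‖cand P ν uφ v t‖ ≤ ‖v‖ := by
  rw [cand]
  split_ifs with h0
  · exact le_rfl
  rcases lt_or_ge 0 t with ht | ht
  swap
  · rw [Ioo_eq_empty (not_lt.mpr ht)]
    simp
  have hmeas : Measurable fun h : ℝ => uφ h * (ν (Ioi (t - h))).toReal := by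
    refine huφm.mul (ENNReal.measurable_toReal.comp ?_)
    exact (Antitone.measurable (fun a b hab => measure_mono (Ioi_subset_Ioi hab))).comp
      (measurable_const.sub measurable_id)
  have hkey : (∫ h in Ioo 0 t, uφ h * (ν (Ioi (t - h))).toReal) ≤ 1 := by
    have hnn : 0 ≤ᵐ[volume.restrict (Ioo 0 t)] fun h => uφ h * (ν (Ioi (t - h))).toReal := by
      filter_upwards [ae_restrict_mem measurableSet_Ioo] with h hh
      exact mul_nonneg (huφ0 h hh.1) ENNReal.toReal_nonneg
    rw [integral_eq_lintegral_of_nonneg_ae hnn hmeas.aestronglyMeasurable]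
    calc (∫⁻ h in Ioo 0 t, ENNReal.ofReal (uφ h * (ν (Ioi (t - h))).toReal)).toReal
        ≤ (1 : ENNReal).toReal := ENNReal.toReal_mono ENNReal.one_ne_top (aux_lint_le huφ0 hrenew ht)
      _ = 1 := by simp
  calc ‖∫ h in Ioo 0 t, uφ h • (∫ r in Ioi (t - h), P (r + h) v ∂ν)‖
      ≤ ∫ h in Ioo 0 t, uφ h * (ν (Ioi (t - h))).toReal * ‖v‖ := by
        refine norm_integral_le_of_norm_le
          ((aux_dom_integrable huφm huφ0 hrenew ht).mul_const ‖v‖) ?_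
        filter_upwards [ae_restrict_mem measurableSet_Ioo] with h hh
        rw [aux_norm_smul, abs_of_nonneg (huφ0 h hh.1)]
        have hb := aux_inner_norm hPcon hν1 v
          (by simp only [mem_Ioo] at hh; linarith [hh.1, hh.2] : (0:ℝ) < t - h) hh.1
        calc uφ h * ‖∫ r in Ioi (t - h), P (r + h) v ∂ν‖
            ≤ uφ h * (‖v‖ * (ν (Ioi (t - h))).toReal) :=
              mul_le_mul_of_nonneg_left hb (huφ0 h hh.1)
          _ = uφ h * (ν (Ioi (t - h))).toReal * ‖v‖ := by ring
    _ = (∫ h in Ioo 0 t, uφ h * (ν (Ioi (t - h))).toReal) * ‖v‖ := integral_mul_const _ _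
    _ ≤ 1 * ‖v‖ := mul_le_mul_of_nonneg_right hkey (norm_nonneg v)
    _ = ‖v‖ := one_mul _

lemma aux_main_integrable
    (hPcon : ∀ t : ℝ, 0 ≤ t → ∀ f : C₀(E, ℝ), ‖P t f‖ ≤ ‖f‖)
    (hν1 : ∫⁻ s in Set.Ioi (0 : ℝ), ENNReal.ofReal (min 1 s) ∂ν ≠ ⊤)
    (huφm : Measurable uφ) (huφ0 : ∀ t : ℝ, 0 < t → 0 ≤ uφ t)
    (hrenew : ∀ t : ℝ, 0 < t →
      ∫⁻ h in Set.Ioo 0 t, ν (Set.Ioi (t - h)) * ENNReal.ofReal (uφ h) = 1)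
    (v : C₀(E, ℝ)) (hcont : Continuous fun x : ℝ => P (max x 0) v)
    {l : ℝ} (hl : 0 < l) :
    IntegrableOn (fun t => Real.exp (-(l * t)) • cand P ν uφ v t) (Ioi 0) volume := by
  haveI := aux_nu0_sigmaFinite hν1
  have haesm : AEStronglyMeasurable (fun t => Real.exp (-(l * t)) • cand P ν uφ v t)
      (volume.restrict (Ioi 0)) := by
    refine AEStronglyMeasurable.smul (?_ : AEStronglyMeasurable (fun t : ℝ => Real.exp (-(l * t))) (volume.restrict (Ioi 0))) (aux_cand_aesm (ν := ν) huφm hcont)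
    exact (Real.continuous_exp.comp (by fun_prop)).aestronglyMeasurable
  refine Integrable.mono' (g := fun t => ‖v‖ * Real.exp (-l * t))
    (Integrable.const_mul (exp_neg_integrableOn_Ioi 0 hl) ‖v‖) haesm ?_
  filter_upwards [ae_restrict_mem measurableSet_Ioi] with t ht
  rw [aux_norm_smul, abs_of_nonneg (Real.exp_pos _).le]
  calc Real.exp (-(l * t)) * ‖cand P ν uφ v t‖
      ≤ Real.exp (-(l * t)) * ‖v‖ :=
        mul_le_mul_of_nonneg_left (aux_cand_norm hPcon hν1 huφm huφ0 hrenew v hcont t)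
          (Real.exp_pos _).le
    _ = ‖v‖ * Real.exp (-l * t) := by rw [neg_mul]; ring

lemma aux_cand_smul (v : C₀(E, ℝ)) (c : ℝ) (t : ℝ) :
    cand P ν uφ (c • v) t = c • cand P ν uφ v t := by
  rw [cand, cand]
  split_ifs with h0
  · rfl
  rw [← integral_smul]
  refine setIntegral_congr_fun measurableSet_Ioo (fun h hh => ?_)
  have h1 : (fun r => P (r + h) (c • v)) = fun r => c • P (r + h) v :=
    funext fun r => map_smul _ _ _
  rw [h1, integral_smul, aux_smul_comm]

lemma aux_cand_sub
    (hPcon : ∀ t : ℝ, 0 ≤ t → ∀ f : C₀(E, ℝ), ‖P t f‖ ≤ ‖f‖)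
    (hν1 : ∫⁻ s in Set.Ioi (0 : ℝ), ENNReal.ofReal (min 1 s) ∂ν ≠ ⊤)
    (huφm : Measurable uφ) (huφ0 : ∀ t : ℝ, 0 < t → 0 ≤ uφ t)
    (hrenew : ∀ t : ℝ, 0 < t →
      ∫⁻ h in Set.Ioo 0 t, ν (Set.Ioi (t - h)) * ENNReal.ofReal (uφ h) = 1)
    (v w : C₀(E, ℝ)) (hcv : Continuous fun x : ℝ => P (max x 0) v)
    (hcw : Continuous fun x : ℝ => P (max x 0) w) (t : ℝ) :
    cand P ν uφ (v - w) t = cand P ν uφ v t - cand P ν uφ w t := by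
  rw [cand, cand, cand]
  split_ifs with h0
  · rfl
  rcases lt_or_ge 0 t with ht | ht
  swap
  · rw [Ioo_eq_empty (not_lt.mpr ht), Measure.restrict_empty, integral_zero_measure,
      integral_zero_measure, integral_zero_measure, sub_zero]
  have h1 : EqOn (fun h => uφ h • (∫ r in Ioi (t - h), P (r + h) (v - w) ∂ν))
      (fun h => uφ h • (∫ r in Ioi (t - h), P (r + h) v ∂ν)
        - uφ h • (∫ r in Ioi (t - h), P (r + h) w ∂ν)) (Ioo 0 t) := by
    intro h hh
    have hsub : (fun r => P (r + h) (v - w)) = fun r => P (r + h) v - P (r + h) w :=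
      funext fun r => map_sub _ _ _
    simp only
    rw [hsub, integral_sub
      (aux_inner_integrable hPcon hν1 v hcv (by simp only [mem_Ioo] at hh; linarith [hh.1, hh.2]) hh.1)
      (aux_inner_integrable hPcon hν1 w hcw (by simp only [mem_Ioo] at hh; linarith [hh.1, hh.2]) hh.1),
      aux_smul_sub]
  rw [setIntegral_congr_fun measurableSet_Ioo h1]
  exact integral_sub (aux_outer_integrable hPcon hν1 huφm huφ0 hrenew v hcv ht)
    (aux_outer_integrable hPcon hν1 huφm huφ0 hrenew w hcw ht)

lemma aux_P_comm
    (hPsg : ∀ s t : ℝ, 0 ≤ s → 0 ≤ t → P (s + t) = (P s).comp (P t))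
    (hPcon : ∀ t : ℝ, 0 ≤ t → ∀ f : C₀(E, ℝ), ‖P t f‖ ≤ ‖f‖)
    (hν1 : ∫⁻ s in Set.Ioi (0 : ℝ), ENNReal.ofReal (min 1 s) ∂ν ≠ ⊤)
    (huφm : Measurable uφ) (huφ0 : ∀ t : ℝ, 0 < t → 0 ≤ uφ t)
    (hrenew : ∀ t : ℝ, 0 < t →
      ∫⁻ h in Set.Ioo 0 t, ν (Set.Ioi (t - h)) * ENNReal.ofReal (uφ h) = 1)
    (v : C₀(E, ℝ)) (hcv : Continuous fun x : ℝ => P (max x 0) v)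
    {h' : ℝ} (hh' : 0 ≤ h') (t : ℝ) :
    P h' (cand P ν uφ v t) = cand P ν uφ (P h' v) t := by
  rw [cand, cand]
  split_ifs with h0
  · rfl
  rcases lt_or_ge 0 t with ht | ht
  swap
  · rw [Ioo_eq_empty (not_lt.mpr ht), Measure.restrict_empty, integral_zero_measure,
      integral_zero_measure, map_zero]
  rw [← ContinuousLinearMap.integral_comp_comm (P h')
    (aux_outer_integrable hPcon hν1 huφm huφ0 hrenew v hcv ht)]
  refine setIntegral_congr_fun measurableSet_Ioo (fun h hh => ?_)
  rw [ContinuousLinearMap.map_smul]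
  congr 1
  rw [← ContinuousLinearMap.integral_comp_comm (P h')
    (aux_inner_integrable hPcon hν1 v hcv (by simp only [mem_Ioo] at hh; linarith [hh.1, hh.2]) hh.1)]
  refine setIntegral_congr_fun measurableSet_Ioi (fun r hr => ?_)
  have hh0 : (0:ℝ) < h := hh.1
  have hht : h < t := hh.2
  have hr0 : (0:ℝ) ≤ r + h := by simp only [mem_Ioi] at hr; linarith
  have e1 := hPsg h' (r + h) hh' hr0
  have e2 := hPsg (r + h) h' hr0 hh'
  calc P h' (P (r + h) v) = P (h' + (r + h)) v := by rw [e1]; rfl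
    _ = P ((r + h) + h') v := by rw [add_comm]
    _ = P (r + h) (P h' v) := by rw [e2]; rfl

end


/-- Auxiliary lemma, part (b): for every `u ∈ D(G)` and `λ > 0`, the Laplace transform
`W = ∫₀^∞ e^{-λt} Q(t) dt` exists as a Bochner integral in `C₀(E)`, belongs to `D(G)`,
and `G W = ∫₀^∞ e^{-λt} G Q(t) dt = ∫₀^∞ e^{-λt} Q^G(t) dt`. -/
theorem ctrw_overshoot_aux_b
    {E : Type*} [MetricSpace E] [TopologicalSpace.SeparableSpace E] [LocallyCompactSpace E]
    (P : ℝ → C₀(E, ℝ) →L[ℝ] C₀(E, ℝ))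
    (hP0 : P 0 = ContinuousLinearMap.id ℝ C₀(E, ℝ))
    (hPsg : ∀ s t : ℝ, 0 ≤ s → 0 ≤ t → P (s + t) = (P s).comp (P t))
    (hPpos : ∀ t : ℝ, 0 ≤ t → ∀ f : C₀(E, ℝ), (∀ x, 0 ≤ f x) → ∀ x, 0 ≤ P t f x)
    (hPcon : ∀ t : ℝ, 0 ≤ t → ∀ f : C₀(E, ℝ), ‖P t f‖ ≤ ‖f‖)
    (hPsc : ∀ f : C₀(E, ℝ), Tendsto (fun t => P t f) (𝓝[≥] (0 : ℝ)) (𝓝 f))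
    (ν : Measure ℝ)
    (hν1 : ∫⁻ s in Set.Ioi (0 : ℝ), ENNReal.ofReal (min 1 s) ∂ν ≠ ⊤)
    (hνinf : ν (Set.Ioi (0 : ℝ)) = ⊤)
    (hνpos : ∀ t : ℝ, 0 < t → 0 < ν (Set.Ioi t))
    (uφ : ℝ → ℝ) (huφm : Measurable uφ)
    (huφ0 : ∀ t : ℝ, 0 < t → 0 ≤ uφ t)
    (huφmono : ∀ s t : ℝ, 0 < s → s ≤ t → uφ t ≤ uφ s)
    (hrenew : ∀ t : ℝ, 0 < t →
      ∫⁻ h in Set.Ioo 0 t, ν (Set.Ioi (t - h)) * ENNReal.ofReal (uφ h) = 1)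
    (hlog : ∫⁻ t in Set.Ioo (0 : ℝ) 1, ENNReal.ofReal (|Real.log t| * uφ t) ≠ ⊤)
    (u Gu : C₀(E, ℝ))
    (hu : Tendsto (fun h : ℝ => h⁻¹ • (P h u - u)) (𝓝[>] (0 : ℝ)) (𝓝 Gu)) :
    ∀ l : ℝ, 0 < l →
      IntegrableOn (fun t : ℝ => Real.exp (-(l * t)) • cand P ν uφ u t)
        (Set.Ioi 0) volume ∧
      IntegrableOn (fun t : ℝ => Real.exp (-(l * t)) • cand P ν uφ Gu t)
        (Set.Ioi 0) volume ∧
      Tendsto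
        (fun h : ℝ => h⁻¹ •
          (P h (∫ t in Set.Ioi (0 : ℝ), Real.exp (-(l * t)) • cand P ν uφ u t) -
            ∫ t in Set.Ioi (0 : ℝ), Real.exp (-(l * t)) • cand P ν uφ u t))
        (𝓝[>] (0 : ℝ))
        (𝓝 (∫ t in Set.Ioi (0 : ℝ), Real.exp (-(l * t)) • cand P ν uφ Gu t)) := by
  intro l hl
  have hcont : ∀ f : C₀(E, ℝ), Continuous fun s : ℝ => P (max s 0) f :=
    fun f => aux_Pmax_cont hPsg hPcon f (hPsc f)
  have hint : ∀ v : C₀(E, ℝ),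
      IntegrableOn (fun t : ℝ => Real.exp (-(l * t)) • cand P ν uφ v t) (Set.Ioi 0) volume :=
    fun v => aux_main_integrable hPcon hν1 huφm huφ0 hrenew v (hcont v) hl
  refine ⟨hint u, hint Gu, ?_⟩
  have hWsub : ∀ v w : C₀(E, ℝ),
      (∫ t in Set.Ioi (0:ℝ), Real.exp (-(l * t)) • cand P ν uφ v t)
        - (∫ t in Set.Ioi (0:ℝ), Real.exp (-(l * t)) • cand P ν uφ w t)
      = ∫ t in Set.Ioi (0:ℝ), Real.exp (-(l * t)) • cand P ν uφ (v - w) t := by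
    intro v w
    rw [← integral_sub (hint v) (hint w)]
    congr 1
    funext t
    rw [aux_cand_sub hPcon hν1 huφm huφ0 hrenew v w (hcont v) (hcont w) t, aux_smul_sub]
  have hC := exp_neg_integrableOn_Ioi 0 hl
  have hWnorm : ∀ v : C₀(E, ℝ),
      ‖∫ t in Set.Ioi (0:ℝ), Real.exp (-(l * t)) • cand P ν uφ v t‖
        ≤ (∫ t in Set.Ioi (0:ℝ), Real.exp (-l * t)) * ‖v‖ := by
    intro v
    refine le_trans (norm_integral_le_of_norm_le (hC.mul_const ‖v‖) ?_) ?_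
    · filter_upwards [ae_restrict_mem measurableSet_Ioi] with t ht
      rw [aux_norm_smul, abs_of_nonneg (Real.exp_pos _).le, neg_mul l t]
      exact mul_le_mul_of_nonneg_left
        (aux_cand_norm hPcon hν1 huφm huφ0 hrenew v (hcont v) t) (Real.exp_pos _).le
    · rw [integral_mul_const]
  have hEv : (fun h : ℝ => h⁻¹ •
      (P h (∫ t in Set.Ioi (0:ℝ), Real.exp (-(l * t)) • cand P ν uφ u t)
        - ∫ t in Set.Ioi (0:ℝ), Real.exp (-(l * t)) • cand P ν uφ u t))
      =ᶠ[𝓝[>] (0:ℝ)]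
      (fun h : ℝ => ∫ t in Set.Ioi (0:ℝ),
        Real.exp (-(l * t)) • cand P ν uφ (h⁻¹ • (P h u - u)) t) := by
    filter_upwards [self_mem_nhdsWithin] with h hh
    have hh0 : (0:ℝ) < h := hh
    have step1 : P h (∫ t in Set.Ioi (0:ℝ), Real.exp (-(l * t)) • cand P ν uφ u t)
        = ∫ t in Set.Ioi (0:ℝ), Real.exp (-(l * t)) • cand P ν uφ (P h u) t := by
      rw [← ContinuousLinearMap.integral_comp_comm (P h) (hint u)]
      congr 1
      funext t
      rw [ContinuousLinearMap.map_smul,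
        aux_P_comm hPsg hPcon hν1 huφm huφ0 hrenew u (hcont u) hh0.le t]
    rw [step1, hWsub (P h u) u, ← integral_smul]
    congr 1
    funext t
    rw [aux_cand_smul, aux_smul_comm]
  rw [tendsto_congr' hEv, tendsto_iff_norm_sub_tendsto_zero]
  have hb : ∀ h : ℝ,
      ‖(∫ t in Set.Ioi (0:ℝ), Real.exp (-(l * t)) • cand P ν uφ (h⁻¹ • (P h u - u)) t)
        - ∫ t in Set.Ioi (0:ℝ), Real.exp (-(l * t)) • cand P ν uφ Gu t‖
      ≤ (∫ t in Set.Ioi (0:ℝ), Real.exp (-l * t)) * ‖(h⁻¹ • (P h u - u)) - Gu‖ := by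
    intro h
    rw [hWsub _ Gu]
    exact hWnorm _
  have hGu0 : Tendsto (fun h : ℝ =>
      (∫ t in Set.Ioi (0:ℝ), Real.exp (-l * t)) * ‖(h⁻¹ • (P h u - u)) - Gu‖)
      (𝓝[>] (0:ℝ)) (𝓝 0) := by
    have h1 := (tendsto_iff_norm_sub_tendsto_zero.mp hu).const_mul
      (∫ t in Set.Ioi (0:ℝ), Real.exp (-l * t))
    simpa using h1
  exact squeeze_zero (fun h => norm_nonneg _) hb hGu0
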